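/- Let ℍ = {w ∈ ℂ : Re w > 0} and C ∈ ℂ a constant. If (c_1 - 2)|w|^2 = 2 (Re w)^2 |C|^2 - 4 (Re w) Re(C w̄) holds for all w ∈ ℍ, where c_1 ∈ ℝ, then C is real, c_1 = 2, and C = 0 or C = 2. -/

import Mathlib

open Complex

/-- if (c₁−2)|w|² = 2(Re w)²|C|² − 4(Re w)Re(C w̄) holds for all w in the
right half-plane, then C is real, c₁ = 2, and C = 0 or C = 2. -/
theorem hyperbolic_identity (c1 : ℝ) (C : ℂ)
    (h : ∀ w : ℂ, 0 < w.re →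
      (c1 - 2) * ‖w‖ ^ 2 =
        2 * w.re ^ 2 * ‖C‖ ^ 2 - 4 * w.re * (C * (starRingEnd ℂ) w).re) :
    C.im = 0 ∧ c1 = 2 ∧ (C = 0 ∨ C = 2) := by
  have h1 := h 1 (by norm_num)
  have h2 := h (1 + I) (by simp)
  have h3 := h (1 - I) (by simp)
  simp only [Complex.sq_norm, Complex.normSq_apply, Complex.add_re, Complex.add_im,
    Complex.sub_re, Complex.sub_im, Complex.one_re, Complex.one_im, Complex.I_re,
    Complex.I_im, Complex.mul_re, Complex.mul_im, Complex.conj_re, Complex.conj_im] at h1 h2 h3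
  have him : C.im = 0 := by nlinarith
  have hc1 : c1 = 2 := by nlinarith
  refine ⟨him, hc1, ?_⟩
  have hre : C.re = 0 ∨ C.re = 2 := by
    have : C.re * (C.re - 2) = 0 := by nlinarith
    rcases mul_eq_zero.1 this with h' | h'
    · exact Or.inl h'
    · exact Or.inr (by linarith)
  rcases hre with h' | h'
  · exact Or.inl (Complex.ext h' him)
  · exact Or.inr (Complex.ext (by simpa using h') (by simpa using him))
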